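/- In the edge-weighted graph G on vertices {1,...,8} defined by the weight table with w(i,i+1) = 2 for i = 1,...,7, twelve specified edges of weight 1, and all remaining edges of weight 0, the path 1-2-3-4-5-6-7-8 is the unique maximum-weight spanning tree, having weight 14. -/

import Mathlib

open Set

/-- A plane drawing (embedding) of a simple graph: vertices are distinct points of the
plane, each edge is a simple arc between its endpoints, arcs meet only at common endpoints,
and arc interiors avoid all vertex points. -/
structure PlaneDrawing {V : Type*} (G : SimpleGraph V) where
  vpos : V → ℝ × ℝ
  vinj : Function.Injective vpos
  arc : V → V → ℝ → ℝ × ℝ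
  arc_symm : ∀ u v t, arc u v t = arc v u (1 - t)
  arc_cont : ∀ ⦃u v⦄, G.Adj u v → ContinuousOn (arc u v) (Icc 0 1)
  arc_src : ∀ ⦃u v⦄, G.Adj u v → arc u v 0 = vpos u
  arc_tgt : ∀ ⦃u v⦄, G.Adj u v → arc u v 1 = vpos v
  arc_inj : ∀ ⦃u v⦄, G.Adj u v → InjOn (arc u v) (Icc 0 1)
  arc_avoid : ∀ ⦃u v⦄, G.Adj u v → ∀ t ∈ Ioo (0:ℝ) 1, ∀ w, arc u v t ≠ vpos w
  arc_disjoint : ∀ ⦃u v x y⦄, G.Adj u v → G.Adj x y → s(u, v) ≠ s(x, y) →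
    ∀ ⦃s t : ℝ⦄, s ∈ Ioo (0:ℝ) 1 → t ∈ Ioo (0:ℝ) 1 → arc u v s ≠ arc x y t

namespace PlaneDrawing

variable {V : Type*} {G : SimpleGraph V}

/-- The set of points of the plane covered by the drawing. -/
def support (D : PlaneDrawing G) : Set (ℝ × ℝ) :=
  (Set.range D.vpos) ∪ ⋃ (u : V) (v : V) (_ : G.Adj u v), D.arc u v '' Icc 0 1

/-- A face of the drawing: a connected component of the complement of the drawing. -/
def IsFace (D : PlaneDrawing G) (Fc : Set (ℝ × ℝ)) : Prop :=
  ∃ x ∉ D.support, Fc = connectedComponentIn (D.support)ᶜ x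

/-- The edge `{u,v}` lies on (the boundary of) the face `Fc`. -/
def EdgeOn (D : PlaneDrawing G) (u v : V) (Fc : Set (ℝ × ℝ)) : Prop :=
  G.Adj u v ∧ D.arc u v '' Icc 0 1 ⊆ closure Fc

/-- The face `Fc` is bounded by the 3-cycle (triangle) on the vertices `a, b, c`. -/
def FaceTriangle (D : PlaneDrawing G) (Fc : Set (ℝ × ℝ)) (a b c : V) : Prop :=
  D.IsFace Fc ∧ G.Adj a b ∧ G.Adj b c ∧ G.Adj a c ∧
    frontier Fc = D.arc a b '' Icc 0 1 ∪ D.arc b c '' Icc 0 1 ∪ D.arc a c '' Icc 0 1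

/-- The drawing has a triangular face with vertices `a, b, c`. -/
def HasFace (D : PlaneDrawing G) (a b c : V) : Prop :=
  ∃ Fc, D.FaceTriangle Fc a b c

end PlaneDrawing

/-- A graph is planar if it admits a plane drawing. -/
def SimpleGraph.IsPlanar {V : Type*} (G : SimpleGraph V) : Prop :=
  Nonempty (PlaneDrawing G)

/-- A graph is maximal planar if it is planar and no edge between distinct
non-adjacent vertices can be added while preserving planarity. -/
def SimpleGraph.IsMaximalPlanar {V : Type*} (G : SimpleGraph V) : Prop :=
  G.IsPlanar ∧ ∀ u v : V, u ≠ v → ¬ G.Adj u v →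
    ¬ SimpleGraph.IsPlanar (G ⊔ SimpleGraph.fromEdgeSet {s(u, v)})

open scoped Classical

/-- The edge weights of the counterexample graph: vertex `i : Fin 8` stands for
vertex `i+1` of the paper.  Consecutive vertices get weight 2, twelve specified
pairs get weight 1, all other pairs weight 0. -/
noncomputable def cw (i j : Fin 8) : ℝ :=
  if i.val + 1 = j.val ∨ j.val + 1 = i.val then 2
  else if (min i.val j.val, max i.val j.val) ∈
      [(0,2),(0,3),(0,4),(0,7),(1,4),(1,5),(1,7),(2,5),(2,7),(3,5),(3,6),(4,6)] then 1
  else 0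

/-- The total weight of a graph on `Fin 8`: the sum of the weights of its edges. -/
noncomputable def cweight (H : SimpleGraph (Fin 8)) : ℝ :=
  (∑ i : Fin 8, ∑ j : Fin 8, if H.Adj i j then cw i j else 0) / 2


section Aux

open SimpleGraph

instance pathGraph8AdjDec : DecidableRel (SimpleGraph.pathGraph 8).Adj := fun _ _ =>
  decidable_of_iff _ pathGraph_adj.symm

instance pathGraph8DelAdjDec (v w : Fin 8) :
    DecidableRel (SimpleGraph.pathGraph 8 \ SimpleGraph.fromEdgeSet {s(v, w)}).Adj := fun a b =>
  decidable_of_iff ((pathGraph 8).Adj a b ∧ ¬(s(a, b) = s(v, w) ∧ a ≠ b)) (by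
    simp only [sdiff_adj, fromEdgeSet_adj, Set.mem_singleton_iff])

lemma pathGraph8_isTree : (SimpleGraph.pathGraph 8).IsTree := by
  constructor
  · exact pathGraph_connected 7
  · rw [isAcyclic_iff_forall_adj_isBridge]
    have h : ∀ v w : Fin 8, (pathGraph 8).Adj v w →
        ¬(pathGraph 8 \ fromEdgeSet {s(v, w)}).Reachable v w := by decide
    intro v w hvw
    exact isBridge_iff.mpr (h v w hvw)

lemma cw_symm (i j : Fin 8) : cw i j = cw j i := by
  unfold cw
  exact if_congr or_comm rfl (if_congr (by rw [min_comm, max_comm]) rfl rfl)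

/-- The weight function on unordered pairs. -/
noncomputable def fwt : Sym2 (Fin 8) → ℝ := Sym2.lift ⟨cw, cw_symm⟩

lemma cw_le_two (i j : Fin 8) : cw i j ≤ 2 := by
  unfold cw; split_ifs <;> norm_num

lemma cw_lt_two {i j : Fin 8} (h : ¬(i.val + 1 = j.val ∨ j.val + 1 = i.val)) :
    cw i j < 2 := by
  unfold cw; split_ifs <;> first | (exact absurd ‹_› h) | norm_num

lemma fwt_le_two (e : Sym2 (Fin 8)) : fwt e ≤ 2 := by
  induction e using Sym2.ind with
  | _ i j => exact cw_le_two i j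

lemma cweight_eq (H : SimpleGraph (Fin 8)) :
    cweight H = ∑ e ∈ H.edgeFinset, fwt e := by
  classical
  have h1 : (∑ i : Fin 8, ∑ j : Fin 8, if H.Adj i j then cw i j else 0)
      = ∑ d : H.Dart, fwt d.edge := by
    rw [← Finset.sum_product']
    rw [show (∑ p ∈ (Finset.univ ×ˢ Finset.univ), if H.Adj p.1 p.2 then cw p.1 p.2 else 0)
        = ∑ p ∈ (Finset.univ ×ˢ Finset.univ).filter (fun p => H.Adj p.1 p.2), cw p.1 p.2
      from (Finset.sum_filter _ _).symm]
    refine (Finset.sum_bij (fun d _ => d.toProd) ?_ ?_ ?_ ?_).symm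
    · intro d _; simp [d.adj]
    · intro a _ b _ h; exact SimpleGraph.Dart.ext _ _ h
    · intro p hp
      simp only [Finset.mem_filter] at hp
      exact ⟨⟨p, hp.2⟩, Finset.mem_univ _, rfl⟩
    · intro d _
      show fwt d.edge = cw d.toProd.1 d.toProd.2
      rw [SimpleGraph.Dart.edge]
      rfl
  have h2 : (∑ d : H.Dart, fwt d.edge) = ∑ e ∈ H.edgeFinset, 2 * fwt e := by
    rw [← Finset.sum_fiberwise_of_maps_to (g := SimpleGraph.Dart.edge)
      (t := H.edgeFinset) (fun d _ => by simp [SimpleGraph.Dart.edge_mem])]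
    refine Finset.sum_congr rfl fun e he => ?_
    have hc : ∀ d ∈ Finset.filter (fun d : H.Dart => d.edge = e) Finset.univ,
        fwt d.edge = fwt e := fun d hd => by rw [(Finset.mem_filter.mp hd).2]
    rw [Finset.sum_congr rfl hc, Finset.sum_const]
    have := H.dart_edge_fiber_card e (SimpleGraph.mem_edgeFinset.mp he)
    convert_to (2 : ℕ) • fwt e = 2 * fwt e
    · rw [← this]
    · simp [mul_comm]
  rw [cweight, h1, h2, ← Finset.mul_sum]
  ring

lemma cweight_path : cweight (SimpleGraph.pathGraph 8) = 14 := by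
  rw [cweight]
  simp only [SimpleGraph.pathGraph_adj, Fin.sum_univ_succ, Fin.sum_univ_zero, cw]
  norm_num

end Aux

/-- In the counterexample graph, the path `1-2-⋯-8` is the unique
maximum-weight spanning tree, of weight 14. -/
theorem path_is_unique_mst :
    (SimpleGraph.pathGraph 8).IsTree ∧
    cweight (SimpleGraph.pathGraph 8) = 14 ∧
    ∀ T : SimpleGraph (Fin 8), T.IsTree → T ≠ SimpleGraph.pathGraph 8 →
      cweight T < cweight (SimpleGraph.pathGraph 8) := by
  classical
  have hPtree := pathGraph8_isTree
  refine ⟨hPtree, cweight_path, ?_⟩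
  intro T hT hne
  have hcardP : (SimpleGraph.pathGraph 8).edgeFinset.card = 7 := by
    have := hPtree.card_edgeFinset
    simp only [Fintype.card_fin] at this
    omega
  have hcardT : T.edgeFinset.card = 7 := by
    have := hT.card_edgeFinset
    simp only [Fintype.card_fin] at this
    omega
  have hsub : ¬ T.edgeFinset ⊆ (SimpleGraph.pathGraph 8).edgeFinset := by
    intro hs
    exact hne (SimpleGraph.edgeFinset_inj.mp
      (Finset.eq_of_subset_of_card_le hs (by omega)))
  obtain ⟨e, heT, heP⟩ := Finset.not_subset.mp hsub
  have hlt : fwt e < 2 := by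
    induction e using Sym2.ind with
    | _ i j =>
      refine cw_lt_two fun hc => heP ?_
      rw [SimpleGraph.mem_edgeFinset, SimpleGraph.mem_edgeSet, SimpleGraph.pathGraph_adj]
      exact hc
  have : cweight T < ∑ _e ∈ T.edgeFinset, (2:ℝ) := by
    rw [cweight_eq]
    exact Finset.sum_lt_sum (fun f _ => fwt_le_two f) ⟨e, heT, hlt⟩
  rw [Finset.sum_const, hcardT] at this
  rw [cweight_path]
  calc cweight T < (7:ℕ) • (2:ℝ) := this
    _ = 14 := by norm_num
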